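/- Let t > 0, ρ ≥ 0 and D ∈ ℝ. The function f : ℝ → ℝ defined by f(z) = √(ρ² + z²) + (D − z)·√(1 + t²)/t is strictly decreasing. Consequently, for d with |d_z| > t·ρ(d), splitting the altitude change as a straight ascent z followed by a maximal-slope detour for the remainder is optimized by taking z as large as the slope constraint allows, namely z = t·ρ(d); reducing the remaining vertical distance further would increase the planar distance by the factor 1/t > 1 and hence the total length. -/
import Mathlib


theorem stmt_11 (t ρ D : ℝ) (ht : 0 < t) (hρ : 0 ≤ ρ) :
    StrictAnti (fun z : ℝ =>
      Real.sqrt (ρ ^ 2 + z ^ 2) + (D - z) * Real.sqrt (1 + t ^ 2) / t) ∧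
    1 < Real.sqrt (1 + t ^ 2) / t := by
  have ht2 : t < Real.sqrt (1 + t ^ 2) := by
    have : Real.sqrt (t ^ 2) < Real.sqrt (1 + t ^ 2) :=
      Real.sqrt_lt_sqrt (by positivity) (by linarith)
    rwa [Real.sqrt_sq ht.le] at this
  have hc : 1 < Real.sqrt (1 + t ^ 2) / t := (one_lt_div ht).mpr ht2
  refine ⟨?_, hc⟩
  intro a b hab
  simp only
  have sa := Real.sq_sqrt (show (0:ℝ) ≤ ρ ^ 2 + a ^ 2 by positivity)
  have sna := Real.sqrt_nonneg (ρ ^ 2 + a ^ 2)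
  have ha' : a ≤ Real.sqrt (ρ ^ 2 + a ^ 2) := by nlinarith
  have key : Real.sqrt (ρ ^ 2 + b ^ 2) ≤ Real.sqrt (ρ ^ 2 + a ^ 2) + (b - a) := by
    rw [show Real.sqrt (ρ ^ 2 + a ^ 2) + (b - a)
        = Real.sqrt ((Real.sqrt (ρ ^ 2 + a ^ 2) + (b - a)) ^ 2) from
      (Real.sqrt_sq (by nlinarith)).symm]
    apply Real.sqrt_le_sqrt
    nlinarith
  have hmul : (b - a) * 1 < (b - a) * (Real.sqrt (1 + t ^ 2) / t) :=
    mul_lt_mul_of_pos_left hc (by linarith)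
  have e1 : (D - b) * Real.sqrt (1 + t ^ 2) / t
      = (D - b) * (Real.sqrt (1 + t ^ 2) / t) := by ring
  have e2 : (D - a) * Real.sqrt (1 + t ^ 2) / t
      = (D - a) * (Real.sqrt (1 + t ^ 2) / t) := by ring
  rw [e1, e2]
  nlinarith [key, hmul]
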